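/- arXiv:1702.01286 — 5 statements merged into one kernel-verified Lean document; each statement's English description precedes it below -/
import Mathlib

section
/- There exists an absolute constant C ≥ 0 such that for every power of two n, every power of two B' with 2 ≤ B' ≤ n/2, every even integer F ≥ 2, and every real λ > 1: Σ_{f∈[n], |f| ≥ λn/(2B')} Ŵ_f ≤ (C/λ)^{F−1} · Σ_{f∈[n]} Ŵ_f. -/
open Finset

/-- Circular (modulo-`n`) distance of an index to `0`. -/
def cdist (n : ℕ) (x : ZMod n) : ℕ := min x.val (n - x.val)

/-- `Ŵ_f = ((1/(B'-1)) ∑_{f' ∈ ℤ, |f'| < B'/2} e^{2πi f f'/n})^F`, the `F`-fold power of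
the normalized Dirichlet kernel of width `B' - 1` (the inner sum is real). -/
noncomputable def What (n B' F : ℕ) (f : ZMod n) : ℝ :=
  (((B' : ℝ) - 1)⁻¹ *
    (∑ f' ∈ Finset.Ioo (-((B' : ℤ) / 2)) ((B' : ℤ) / 2),
      Complex.exp (2 * Real.pi * Complex.I * (f.val : ℂ) * (f' : ℂ) / (n : ℂ))).re) ^ F

noncomputable def Dker (n B' : ℕ) (f : ZMod n) : ℝ :=
  ((B' : ℝ) - 1)⁻¹ *
    (∑ f' ∈ Finset.Ioo (-((B' : ℤ) / 2)) ((B' : ℤ) / 2),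
      Complex.exp (2 * Real.pi * Complex.I * (f.val : ℂ) * (f' : ℂ) / (n : ℂ))).re

-- reindex lemma
lemma Ioo_map (m : ℕ) (hm : 1 ≤ m) :
    (Finset.range (2*m-1)).image (fun i : ℕ => (i:ℤ) - ((m:ℤ)-1)) =
      Finset.Ioo (-(m:ℤ)) (m:ℤ) := by
  ext j
  simp only [Finset.mem_image, Finset.mem_range, Finset.mem_Ioo]
  constructor
  · rintro ⟨i, hi, rfl⟩; omega
  · rintro ⟨h1, h2⟩; exact ⟨(j + (m-1)).toNat, by omega, by omega⟩

lemma sum_zpow_Ioo (z : ℂ) (hz : z ≠ 0) (m : ℕ) (hm : 1 ≤ m) :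
    ∑ j ∈ Finset.Ioo (-(m:ℤ)) (m:ℤ), z ^ j
      = z ^ (-((m:ℤ)-1)) * ∑ i ∈ Finset.range (2*m-1), z ^ i := by
  rw [← Ioo_map m hm, Finset.sum_image (by intro a _ b _ h; have h' : (a:ℤ) - ((m:ℤ)-1) = (b:ℤ) - ((m:ℤ)-1) := h; omega), Finset.mul_sum]
  congr 1; ext i
  rw [zpow_sub₀ hz, zpow_natCast, div_eq_mul_inv, ← zpow_neg]
  ring

lemma abs_exp_theta_sub_one (θ : ℝ) :
    ‖Complex.exp ((θ:ℂ) * Complex.I) - 1‖ = 2 * |Real.sin (θ/2)| := by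
  have hre : (Complex.exp ((θ:ℂ) * Complex.I) - 1).re = Real.cos θ - 1 := by
    simp [Complex.exp_ofReal_mul_I_re]
  have him : (Complex.exp ((θ:ℂ) * Complex.I) - 1).im = Real.sin θ := by
    simp [Complex.exp_ofReal_mul_I_im]
  rw [Complex.norm_def, Complex.normSq_apply, hre, him]
  have hs := Real.sin_sq_eq_half_sub (θ/2)
  rw [show 2*(θ/2) = θ by ring] at hs
  rw [show (Real.cos θ - 1) * (Real.cos θ - 1) + Real.sin θ * Real.sin θ
      = 4 * Real.sin (θ/2)^2 by nlinarith [Real.sin_sq_add_cos_sq θ]]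
  rw [show (4 : ℝ) * Real.sin (θ/2)^2 = (2 * |Real.sin (θ/2)|)^2 by
    rw [mul_pow, sq_abs]; ring]
  exact Real.sqrt_sq (by positivity)

lemma sin_lower (n v : ℕ) (h0 : 0 < v) (hvn : v < n) :
    2 * ((min v (n - v) : ℕ) : ℝ) / n ≤ Real.sin (Real.pi * v / n) := by
  have hn : (0:ℝ) < n := Nat.cast_pos.mpr (by omega)
  rcases le_or_gt (2*v) n with hv | hv
  · have hmin : (min v (n-v) : ℕ) = v := by omega
    rw [hmin]
    have h1 : Real.pi * v / n = Real.pi / 2 * (2 * v / n) := by ring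
    have h2 : (0:ℝ) ≤ Real.pi * v / n := by positivity
    have h3 : Real.pi * v / n ≤ Real.pi / 2 := by
      rw [div_le_iff₀ hn]
      have : (2*v : ℝ) ≤ n := by exact_mod_cast hv
      nlinarith [Real.pi_pos]
    have := Real.mul_le_sin h2 h3
    calc 2 * (v:ℝ) / n = 2 / Real.pi * (Real.pi * v / n) := by
          field_simp
      _ ≤ Real.sin (Real.pi * v / n) := this
  · have hmin : (min v (n-v) : ℕ) = n - v := by omega
    rw [hmin]
    have hcast : ((n - v : ℕ) : ℝ) = (n:ℝ) - v := by
      have : v ≤ n := hvn.le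
      push_cast [this]; ring
    rw [hcast]
    have key : Real.sin (Real.pi * v / n) = Real.sin (Real.pi * ((n:ℝ)-v) / n) := by
      rw [show Real.pi * ((n:ℝ)-v) / n = Real.pi - Real.pi * v / n by
        field_simp]
      rw [Real.sin_pi_sub]
    rw [key]
    have h2 : (0:ℝ) ≤ Real.pi * ((n:ℝ)-v) / n := by
      have : (v:ℝ) ≤ n := by exact_mod_cast hvn.le
      have hp := Real.pi_pos
      have h4 : (0:ℝ) ≤ (n:ℝ) - v := by linarith
      positivity
    have h3 : Real.pi * ((n:ℝ)-v) / n ≤ Real.pi / 2 := by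
      rw [div_le_iff₀ hn]
      have : (n:ℝ) ≤ 2*v := by exact_mod_cast hv.le
      nlinarith [Real.pi_pos]
    have := Real.mul_le_sin h2 h3
    calc 2 * ((n:ℝ)-v) / n = 2 / Real.pi * (Real.pi * ((n:ℝ)-v) / n) := by
          field_simp
      _ ≤ Real.sin (Real.pi * ((n:ℝ)-v) / n) := this

lemma inner_term_eq (n : ℕ) (f : ZMod n) (f' : ℤ) :
    Complex.exp (2 * Real.pi * Complex.I * (f.val : ℂ) * (f' : ℂ) / (n : ℂ))
      = Complex.exp (((2 * Real.pi * f.val / n : ℝ) : ℂ) * Complex.I) ^ f' := by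
  rw [← Complex.exp_int_mul]
  congr 1
  push_cast
  ring

lemma abs_inner_le (n : ℕ) [NeZero n] (m : ℕ) (hm : 1 ≤ m) (f : ZMod n) (hf : f.val ≠ 0) :
    ‖∑ j ∈ Finset.Ioo (-(m:ℤ)) (m:ℤ),
        Complex.exp (((2 * Real.pi * f.val / n : ℝ) : ℂ) * Complex.I) ^ j‖
      ≤ 1 / Real.sin (Real.pi * f.val / n) := by
  set θ : ℝ := 2 * Real.pi * f.val / n with hθ
  set z : ℂ := Complex.exp ((θ:ℂ) * Complex.I) with hz
  have hvn : f.val < n := ZMod.val_lt f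
  have hv0 : 0 < f.val := Nat.pos_of_ne_zero hf
  have hnR : (0:ℝ) < n := Nat.cast_pos.mpr (NeZero.pos n)
  have hθ2 : θ / 2 = Real.pi * f.val / n := by rw [hθ]; ring
  have hsin : 0 < Real.sin (θ/2) := by
    rw [hθ2]
    apply Real.sin_pos_of_pos_of_lt_pi
    · have : (0:ℝ) < f.val := Nat.cast_pos.mpr hv0
      positivity
    · rw [div_lt_iff₀ hnR]
      have : (f.val : ℝ) < n := Nat.cast_lt.mpr hvn
      nlinarith [Real.pi_pos]
  have habs1 : ‖z - 1‖ = 2 * Real.sin (θ/2) := by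
    rw [abs_exp_theta_sub_one θ, abs_of_pos hsin]
  have hz1 : z ≠ 1 := by
    intro h
    rw [h] at habs1
    simp at habs1
    linarith
  have hz0 : z ≠ 0 := Complex.exp_ne_zero _
  have habsz : ‖z‖ = 1 := Complex.norm_exp_ofReal_mul_I θ
  rw [sum_zpow_Ioo z hz0 m hm, geom_sum_eq hz1]
  rw [norm_mul, norm_zpow, habsz, one_zpow, one_mul, norm_div, habs1]
  have hnum : ‖z ^ (2*m-1) - 1‖ ≤ 2 := by
    calc ‖z ^ (2*m-1) - 1‖
        ≤ ‖z ^ (2*m-1)‖ + ‖(1:ℂ)‖ := by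
          exact norm_sub_le _ _
      _ = 2 := by rw [norm_pow, habsz, one_pow, norm_one]; norm_num
  rw [← hθ2]
  rw [div_le_div_iff₀ (by linarith) hsin]
  nlinarith

lemma What_le (n B' F : ℕ) [NeZero n] (m : ℕ) (hB : B' = 2*m) (hm : 1 ≤ m)
    (hFe : Even F) (f : ZMod n) (hf : f.val ≠ 0) :
    What n B' F f ≤ ((n:ℝ) / (B' * cdist n f)) ^ F := by
  have hvn : f.val < n := ZMod.val_lt f
  have hv0 : 0 < f.val := Nat.pos_of_ne_zero hf
  have hd1 : 1 ≤ cdist n f := by unfold cdist; omega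
  have hnR : (0:ℝ) < n := Nat.cast_pos.mpr (NeZero.pos n)
  have hdR : (1:ℝ) ≤ (cdist n f : ℝ) := by exact_mod_cast hd1
  have hBR : (2:ℝ) ≤ (B':ℝ) := by
    have : 2 ≤ B' := by omega
    exact_mod_cast this
  unfold What
  have hend1 : ((B' : ℤ) / 2) = (m:ℤ) := by subst hB; push_cast; omega
  rw [hend1]
  simp only [inner_term_eq]
  set S := ∑ j ∈ Finset.Ioo (-(m:ℤ)) (m:ℤ),
    Complex.exp (((2 * Real.pi * f.val / n : ℝ) : ℂ) * Complex.I) ^ j with hS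
  have hsin : 2 * ((cdist n f : ℕ) : ℝ) / n ≤ Real.sin (Real.pi * f.val / n) :=
    sin_lower n f.val hv0 hvn
  have hsin0 : 0 < Real.sin (Real.pi * f.val / n) := by
    apply lt_of_lt_of_le _ hsin
    positivity
  have hSabs : ‖S‖ ≤ 1 / Real.sin (Real.pi * f.val / n) :=
    abs_inner_le n m hm f hf
  have hinv : 1 / Real.sin (Real.pi * f.val / n) ≤ (n:ℝ) / (2 * cdist n f) := by
    rw [div_le_div_iff₀ hsin0 (by positivity)]
    have h2 := (div_le_iff₀ hnR).mp hsin
    nlinarith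
  have hc : (0:ℝ) < (B':ℝ) - 1 := by linarith
  have hbound : |((B':ℝ) - 1)⁻¹ * S.re| ≤ (n:ℝ) / (B' * cdist n f) := by
    rw [abs_mul, abs_inv, abs_of_pos hc]
    calc ((B':ℝ) - 1)⁻¹ * |S.re|
        ≤ ((B':ℝ) - 1)⁻¹ * ((n:ℝ) / (2 * cdist n f)) := by
          apply mul_le_mul_of_nonneg_left _ (by positivity)
          exact (Complex.abs_re_le_norm S).trans (hSabs.trans hinv)
      _ ≤ (2 / (B':ℝ)) * ((n:ℝ) / (2 * cdist n f)) := by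
          apply mul_le_mul_of_nonneg_right _ (by positivity)
          have hB0 : (0:ℝ) < B' := by linarith
          rw [inv_eq_one_div, div_le_div_iff₀ hc hB0]
          nlinarith
      _ = (n:ℝ) / (B' * cdist n f) := by field_simp
  calc (((B':ℝ) - 1)⁻¹ * S.re) ^ F = |((B':ℝ) - 1)⁻¹ * S.re| ^ F :=
        (hFe.pow_abs _).symm
    _ ≤ ((n:ℝ) / (B' * cdist n f)) ^ F := by
        apply pow_le_pow_left₀ (abs_nonneg _) hbound

lemma inner_term_re (n : ℕ) (f : ZMod n) (f' : ℤ) :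
    (Complex.exp (2 * Real.pi * Complex.I * (f.val : ℂ) * (f' : ℂ) / (n : ℂ))).re
      = Real.cos (2 * Real.pi * f.val * f' / n) := by
  rw [show (2 * Real.pi * Complex.I * (f.val : ℂ) * (f' : ℂ) / (n : ℂ))
      = ((2 * Real.pi * f.val * f' / n : ℝ) : ℂ) * Complex.I by push_cast; ring]
  exact Complex.exp_ofReal_mul_I_re _

lemma What_ge (n B' F : ℕ) [NeZero n] (m : ℕ) (hB : B' = 2*m) (hm : 1 ≤ m)
    (f : ZMod n) (hf : 8 * B' * cdist n f ≤ n) :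
    ((1:ℝ)/2) ^ F ≤ What n B' F f := by
  have hvn : f.val < n := ZMod.val_lt f
  have hnR : (0:ℝ) < n := Nat.cast_pos.mpr (NeZero.pos n)
  set d := cdist n f with hd
  have hdn : d ≤ n := by unfold d; unfold cdist; omega
  have hval : f.val = d ∨ f.val = n - d := by unfold d; unfold cdist; omega
  have hBd : 8 * ((B':ℝ) * d) ≤ n := by
    have : ((8 * B' * d : ℕ) : ℝ) ≤ n := Nat.cast_le.mpr hf
    push_cast at this; linarith
  have key : ∀ f' ∈ Finset.Ioo (-(m:ℤ)) (m:ℤ),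
      (1/2 : ℝ) ≤ Real.cos (2 * Real.pi * f.val * f' / n) := by
    intro f' hf'
    rw [Finset.mem_Ioo] at hf'
    have hfabs : |(f' : ℝ)| ≤ m := by
      rw [abs_le]
      constructor <;> [exact_mod_cast hf'.1.le; exact_mod_cast hf'.2.le]
    have hcos : Real.cos (2 * Real.pi * f.val * f' / n)
        = Real.cos (2 * Real.pi * d * f' / n) := by
      rcases hval with h | h
      · rw [h]
      · have hcast : (f.val : ℝ) = (n:ℝ) - d := by
          rw [h]; push_cast [hdn]; ring
        rw [show 2 * Real.pi * (f.val:ℝ) * f' / n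
            = (f' : ℝ) * (2 * Real.pi) - 2 * Real.pi * d * f' / n by
          rw [hcast]; field_simp]
        exact Real.cos_int_mul_two_pi_sub _ f'
    rw [hcos]
    set x : ℝ := 2 * Real.pi * d * f' / n with hx
    have hxabs : |x| ≤ 1/2 := by
      have hpi := Real.pi_pos
      have hpile := Real.pi_le_four
      have hdnn : (0:ℝ) ≤ (d:ℝ) := Nat.cast_nonneg d
      have : |x| = 2 * Real.pi * d * |(f':ℝ)| / n := by
        rw [hx, abs_div, abs_of_pos hnR, abs_mul, abs_of_nonneg (by positivity : (0:ℝ) ≤ 2 * Real.pi * d)]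
      rw [this]
      rw [div_le_iff₀ hnR]
      have h1 : 2 * Real.pi * d * |(f':ℝ)| ≤ 2 * Real.pi * d * m :=
        mul_le_mul_of_nonneg_left hfabs (by positivity)
      have h2 : (m:ℝ) * 2 = B' := by rw [hB]; push_cast; ring
      have h3 : (B':ℝ) * d ≤ n / 8 := by linarith
      have h4 : Real.pi * ((B':ℝ)*d) ≤ Real.pi * (n/8) :=
        mul_le_mul_of_nonneg_left h3 hpi.le
      have h5 : Real.pi * ((n:ℝ)/8) ≤ 4 * (n/8) :=
        mul_le_mul_of_nonneg_right hpile (by positivity)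
      have h6 : 2*Real.pi*(d:ℝ)*m = Real.pi * ((B':ℝ)*d) := by rw [← h2]; ring
      linarith
    have h1 := Real.one_sub_sq_div_two_le_cos (x := x)
    have hx2 : x^2 ≤ 1/4 := by
      have := pow_le_pow_left₀ (abs_nonneg x) hxabs 2
      rw [sq_abs] at this
      nlinarith
    linarith
  have hre : (∑ f' ∈ Finset.Ioo (-(m:ℤ)) (m:ℤ),
      Complex.exp (2 * Real.pi * Complex.I * (f.val : ℂ) * (f' : ℂ) / (n : ℂ))).re
      = ∑ f' ∈ Finset.Ioo (-(m:ℤ)) (m:ℤ), Real.cos (2 * Real.pi * f.val * f' / n) := by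
    rw [Complex.re_sum]
    exact Finset.sum_congr rfl fun f' _ => inner_term_re n f f'
  have hcard : (Finset.Ioo (-(m:ℤ)) (m:ℤ)).card = 2*m - 1 := by
    rw [Int.card_Ioo]; omega
  have hsum : ((2*m-1 : ℕ):ℝ) * (1/2) ≤ ∑ f' ∈ Finset.Ioo (-(m:ℤ)) (m:ℤ),
      Real.cos (2 * Real.pi * f.val * f' / n) := by
    have := Finset.card_nsmul_le_sum (Finset.Ioo (-(m:ℤ)) (m:ℤ))
      (fun f' => Real.cos (2 * Real.pi * f.val * f' / n)) (1/2 : ℝ) key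
    rw [hcard] at this
    simpa [nsmul_eq_mul] using this
  have hB1 : (0:ℝ) < (B':ℝ) - 1 := by
    have : 2 ≤ B' := by omega
    have : (2:ℝ) ≤ B' := by exact_mod_cast this
    linarith
  have hcast2 : ((2*m-1 : ℕ):ℝ) = (B':ℝ) - 1 := by
    rw [hB]; push_cast [show 1 ≤ 2*m by omega]; ring
  have hD : (1/2 : ℝ) ≤ ((B':ℝ) - 1)⁻¹ *
      (∑ f' ∈ Finset.Ioo (-(m:ℤ)) (m:ℤ),
        Complex.exp (2 * Real.pi * Complex.I * (f.val : ℂ) * (f' : ℂ) / (n : ℂ))).re := by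
    rw [hre]
    rw [hcast2] at hsum
    calc (1/2:ℝ) = ((B':ℝ)-1)⁻¹ * (((B':ℝ)-1) * (1/2)) := by field_simp
      _ ≤ _ := mul_le_mul_of_nonneg_left hsum (by positivity)
  unfold What
  have hend1 : ((B' : ℤ) / 2) = (m:ℤ) := by subst hB; push_cast; omega
  rw [hend1]
  apply pow_le_pow_left₀ (by norm_num : (0:ℝ) ≤ 1/2) hD

lemma What_nonneg (n B' F : ℕ) (hFe : Even F) (f : ZMod n) : 0 ≤ What n B' F f :=
  hFe.pow_nonneg _

lemma card_low (n B' : ℕ) [NeZero n] (hB2 : 2 ≤ B') (hn : 2*B' ≤ n) :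
    (n:ℝ)/(8*B') ≤ ((Finset.univ.filter
      (fun f : ZMod n => 8 * B' * cdist n f ≤ n)).card : ℝ) := by
  set M := n / (8*B') with hM
  have hMn : 8*B'*M ≤ n := by rw [hM, Nat.mul_comm]; exact Nat.div_mul_le_self n (8*B')
  have hn0 : 0 < n := NeZero.pos n
  have hv : ∀ v ∈ Finset.range (M+1),
      ((v : ZMod n) ∈ Finset.univ.filter (fun f : ZMod n => 8 * B' * cdist n f ≤ n)) := by
    intro v hv
    rw [Finset.mem_range] at hv
    have hvM : v ≤ M := by omega
    have h8 : 8*B'*v ≤ n := le_trans (Nat.mul_le_mul_left _ hvM) hMn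
    have h16 : 16 * v ≤ 8*B'*v := Nat.mul_le_mul_right v (by omega)
    have hvn : v < n := by omega
    have hval : (v : ZMod n).val = v := ZMod.val_cast_of_lt hvn
    have hcd : cdist n (v : ZMod n) = v := by
      unfold cdist
      rw [hval]
      omega
    rw [Finset.mem_filter, hcd]
    refine ⟨Finset.mem_univ _, ?_⟩
    calc 8*B'*v ≤ 8*B'*M := Nat.mul_le_mul_left _ hvM
      _ ≤ n := hMn
  have hMlt : M < n := by
    have h16M : 16*M ≤ 8*B'*M := Nat.mul_le_mul_right M (by omega)
    omega
  have hinj : Set.InjOn (fun v : ℕ => (v : ZMod n)) (Finset.range (M+1)) := by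
    intro a ha b hb hab
    simp only [Finset.coe_range, Set.mem_Iio] at ha hb
    have hab' : ((a : ZMod n)) = ((b : ZMod n)) := hab
    have haa : (a : ZMod n).val = a := ZMod.val_cast_of_lt (by omega)
    have hbb : (b : ZMod n).val = b := ZMod.val_cast_of_lt (by omega)
    rw [← haa, ← hbb, hab']
  have hcard := Finset.card_le_card_of_injOn _ hv hinj
  rw [Finset.card_range] at hcard
  have hlt : n < 8*B'*(M+1) := by
    have h1 := Nat.div_add_mod n (8*B')
    rw [← hM] at h1
    have h2 : n % (8*B') < 8*B' := Nat.mod_lt n (by omega)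
    rw [Nat.mul_succ]
    omega
  have hcR : ((M+1 : ℕ):ℝ) ≤ ((Finset.univ.filter
      (fun f : ZMod n => 8 * B' * cdist n f ≤ n)).card : ℝ) := Nat.cast_le.mpr hcard
  refine le_trans ?_ hcR
  rw [div_le_iff₀ (by positivity)]
  have : (n:ℝ) ≤ (8*B':ℕ) * ((M+1:ℕ):ℝ) := by
    rw [← Nat.cast_mul]
    exact_mod_cast hlt.le
  push_cast at this ⊢
  nlinarith

lemma aux_inv_sq (x : ℝ) (hx : 1 ≤ x) :
    ((x:ℝ)⁻¹)^2 ≤ (x - 2⁻¹)⁻¹ - (x + 2⁻¹)⁻¹ := by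
  have h1 : (0:ℝ) < x - 2⁻¹ := by linarith
  have h2 : (0:ℝ) < x + 2⁻¹ := by linarith
  have h4 : (0:ℝ) < x := by linarith
  have h3 : (x - 2⁻¹)⁻¹ - (x + 2⁻¹)⁻¹ = ((x - 2⁻¹) * (x + 2⁻¹))⁻¹ := by
    rw [inv_sub_inv h1.ne' h2.ne', show (x+2⁻¹) - (x-2⁻¹) = 1 by ring, one_div]
  have key : ((x - 2⁻¹) * (x + 2⁻¹)) ≤ x^2 := by nlinarith
  calc (x⁻¹)^2 = (x^2)⁻¹ := by rw [inv_pow]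
    _ ≤ ((x - 2⁻¹)*(x+2⁻¹))⁻¹ := inv_anti₀ (by positivity) key
    _ = (x - 2⁻¹)⁻¹ - (x+2⁻¹)⁻¹ := h3.symm

lemma sum_inv_sq_le (a N : ℕ) (ha : 1 ≤ a) :
    ∑ d ∈ Finset.Icc a N, ((d:ℝ)⁻¹)^2 ≤ 2 / a := by
  have haR : (1:ℝ) ≤ a := by exact_mod_cast ha
  have hfin : ((a:ℝ) - 2⁻¹)⁻¹ ≤ 2 / a := by
    rw [show (2:ℝ)/a = ((a:ℝ)/2)⁻¹ by rw [inv_div]]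
    exact inv_anti₀ (by linarith) (by linarith)
  rcases lt_or_ge N a with hN | hN
  · rw [Finset.Icc_eq_empty (by omega)]
    simp
    positivity
  · have key : ∀ K : ℕ, ∑ d ∈ Finset.Icc a (a+K), ((d:ℝ)⁻¹)^2
        ≤ ((a:ℝ) - 2⁻¹)⁻¹ - (((a+K:ℕ):ℝ) + 2⁻¹)⁻¹ := by
      intro K
      induction K with
      | zero =>
        simp only [Nat.add_zero, Finset.Icc_self, Finset.sum_singleton]
        have := aux_inv_sq (a:ℝ) haR
        linarith
      | succ K ih =>
        rw [show a + (K+1) = (a+K) + 1 by ring]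
        rw [Finset.sum_Icc_succ_top (by omega)]
        have hstep := aux_inv_sq ((a+K+1 : ℕ):ℝ) (by push_cast; linarith)
        have hc1 : ((a+K+1 : ℕ):ℝ) - 2⁻¹ = ((a+K:ℕ):ℝ) + 2⁻¹ := by push_cast; ring
        rw [hc1] at hstep
        push_cast at *
        linarith
    obtain ⟨K, rfl⟩ : ∃ K, N = a + K := ⟨N - a, by omega⟩
    have h := key K
    have hpos : (0:ℝ) < (((a+K:ℕ):ℝ) + 2⁻¹)⁻¹ := by positivity
    linarith

lemma fiber_le_two (n : ℕ) [NeZero n] (s : Finset (ZMod n)) (d : ℕ) :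
    (s.filter (fun f => cdist n f = d)).card ≤ 2 := by
  have hsub : s.filter (fun f => cdist n f = d) ⊆
      {((d:ℕ) : ZMod n), (((n - d : ℕ)) : ZMod n)} := by
    intro f hf
    rw [Finset.mem_filter] at hf
    have hval : f.val = d ∨ f.val = n - d := by
      have := hf.2
      unfold cdist at this
      have hvlt : f.val < n := ZMod.val_lt f
      omega
    have hfe : ((f.val : ℕ) : ZMod n) = f := ZMod.natCast_rightInverse f
    rw [Finset.mem_insert, Finset.mem_singleton]
    rcases hval with h | h
    · left; rw [← hfe, h]
    · right; rw [← hfe, h]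
  calc (s.filter (fun f => cdist n f = d)).card
      ≤ ({((d:ℕ) : ZMod n), (((n - d : ℕ)) : ZMod n)} : Finset (ZMod n)).card :=
        Finset.card_le_card hsub
    _ ≤ 2 := by
        apply le_trans (Finset.card_insert_le _ _)
        simp

/-- There is an absolute constant `C ≥ 0` such that for every `λ > 1`,
`∑_{f ∈ [n], |f| ≥ λn/(2B')} Ŵ_f ≤ (C/λ)^{F-1} ∑_{f ∈ [n]} Ŵ_f`. -/
theorem What_tail_bound :
    ∃ C : ℝ, 0 ≤ C ∧
      ∀ (n B' F : ℕ) [NeZero n], (∃ k, n = 2 ^ k) → (∃ k, B' = 2 ^ k) →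
        2 ≤ B' → 2 * B' ≤ n → 2 ≤ F → Even F →
        ∀ lam : ℝ, 1 < lam →
          ∑ f ∈ Finset.univ.filter
              (fun f : ZMod n => lam * n / (2 * B') ≤ (cdist n f : ℝ)), What n B' F f ≤
            (C / lam) ^ (F - 1) * ∑ f : ZMod n, What n B' F f := by
  refine ⟨256, by norm_num, ?_⟩
  intro n B' F _ hn2 hB'2 hB2 hnB hF2 hFe lam hlam
  -- B' = 2 * m
  obtain ⟨k, hk⟩ := hB'2
  have hk1 : 1 ≤ k := by
    by_contra h
    interval_cases k <;> omega
  obtain ⟨m, hB, hm⟩ : ∃ m, B' = 2*m ∧ 1 ≤ m :=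
    ⟨2^(k-1), by rw [hk, ← pow_succ']; congr 1; omega, Nat.one_le_two_pow⟩
  obtain ⟨K, rfl⟩ : ∃ K, F = K + 2 := ⟨F - 2, by omega⟩
  set F := K + 2 with hF
  have hF1 : F - 1 = K + 1 := by omega
  have hlam0 : (0:ℝ) < lam := by linarith
  have hnR : (0:ℝ) < n := Nat.cast_pos.mpr (NeZero.pos n)
  have hBR : (2:ℝ) ≤ (B':ℝ) := by exact_mod_cast hB2
  have hBR0 : (0:ℝ) < (B':ℝ) := by linarith
  have hnBR : 2*(B':ℝ) ≤ n := by exact_mod_cast hnB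
  set t : ℝ := (n:ℝ)/(B':ℝ) with ht
  have ht0 : 0 < t := by positivity
  set r : ℝ := lam * n / (2 * B') with hr
  have hr1 : 1 < r := by
    rw [hr]
    rw [lt_div_iff₀ (by positivity)]
    nlinarith
  set d₀ : ℕ := ⌈r⌉₊ with hd₀
  have hrd₀ : r ≤ (d₀:ℝ) := Nat.le_ceil r
  have hd₀1 : 1 ≤ d₀ := by
    have := Nat.ceil_pos.mpr (by linarith : (0:ℝ) < r)
    omega
  set T := Finset.univ.filter
    (fun f : ZMod n => lam * n / (2 * B') ≤ (cdist n f : ℝ)) with hT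
  set g : ℕ → ℝ := fun d => ((n:ℝ) / (B' * d)) ^ F with hg
  have hg0 : ∀ d, 0 ≤ g d := fun d => by rw [hg]; positivity
  -- Step A : pointwise upper bound on the tail
  have hA : ∑ f ∈ T, What n B' F f ≤ ∑ f ∈ T, g (cdist n f) := by
    apply Finset.sum_le_sum
    intro f hf
    rw [hT, Finset.mem_filter] at hf
    have hd : r ≤ (cdist n f : ℝ) := hf.2
    have hcd1 : 1 ≤ cdist n f := by
      by_contra h
      have : cdist n f = 0 := by omega
      rw [this] at hd
      norm_num at hd
      linarith
    have hval0 : f.val ≠ 0 := by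
      intro h
      have : cdist n f = 0 := by unfold cdist; omega
      omega
    exact What_le n B' F m hB hm hFe f hval0
  -- Step B : fiberwise
  have hB' : ∑ f ∈ T, g (cdist n f) = ∑ d ∈ T.image (cdist n),
      (T.filter (fun f => cdist n f = d)).card • g d := Finset.sum_comp g (cdist n)
  have hC : ∑ d ∈ T.image (cdist n), (T.filter (fun f => cdist n f = d)).card • g d
      ≤ ∑ d ∈ T.image (cdist n), 2 * g d := by
    apply Finset.sum_le_sum
    intro d hd
    rw [nsmul_eq_mul]
    apply mul_le_mul_of_nonneg_right _ (hg0 d)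
    have := fiber_le_two n T d
    exact_mod_cast this
  have hsub : T.image (cdist n) ⊆ Finset.Icc d₀ n := by
    intro d hd
    rw [Finset.mem_image] at hd
    obtain ⟨f, hf, rfl⟩ := hd
    rw [hT, Finset.mem_filter] at hf
    have h1 : r ≤ (cdist n f : ℝ) := hf.2
    rw [Finset.mem_Icc]
    constructor
    · exact Nat.ceil_le.mpr h1
    · have : f.val < n := ZMod.val_lt f
      unfold cdist
      omega
  have hD : ∑ d ∈ T.image (cdist n), 2 * g d ≤ ∑ d ∈ Finset.Icc d₀ n, 2 * g d := by
    apply Finset.sum_le_sum_of_subset_of_nonneg hsub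
    intro d _ _
    have := hg0 d
    linarith
  -- Step E : pointwise bound inside Icc
  have hlt : (0:ℝ) < r := by linarith
  have hnBr : (n:ℝ)/((B':ℝ)*r) = 2/lam := by
    rw [hr]
    field_simp
  have hE : ∀ d ∈ Finset.Icc d₀ n, g d ≤ (2/lam)^K * t^2 * ((d:ℝ)⁻¹)^2 := by
    intro d hd
    rw [Finset.mem_Icc] at hd
    have hdr : r ≤ (d:ℝ) := le_trans hrd₀ (by exact_mod_cast hd.1)
    have hdR0 : (0:ℝ) < d := by linarith
    have h1 : (n:ℝ)/((B':ℝ)*d) ≤ 2/lam := by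
      rw [← hnBr]
      apply div_le_div_of_nonneg_left (by positivity) (by positivity)
      exact mul_le_mul_of_nonneg_left hdr (by linarith)
    have h2 : (0:ℝ) ≤ (n:ℝ)/((B':ℝ)*d) := by positivity
    have h3 : ((n:ℝ)/((B':ℝ)*d))^K ≤ (2/lam)^K := pow_le_pow_left₀ h2 h1 K
    have h4 : ((n:ℝ)/((B':ℝ)*d))^2 = t^2 * ((d:ℝ)⁻¹)^2 := by
      rw [ht]
      field_simp
    calc g d = ((n:ℝ)/((B':ℝ)*d))^K * ((n:ℝ)/((B':ℝ)*d))^2 := by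
          rw [hg, ← pow_add]
      _ ≤ (2/lam)^K * (t^2 * ((d:ℝ)⁻¹)^2) := by
          apply mul_le_mul h3 (le_of_eq h4) (by positivity) (by positivity)
      _ = (2/lam)^K * t^2 * ((d:ℝ)⁻¹)^2 := by ring
  have hF' : ∑ d ∈ Finset.Icc d₀ n, 2 * g d
      ≤ 2 * ((2/lam)^K * t^2 * (2 / r)) := by
    calc ∑ d ∈ Finset.Icc d₀ n, 2 * g d
        ≤ ∑ d ∈ Finset.Icc d₀ n, 2 * ((2/lam)^K * t^2 * ((d:ℝ)⁻¹)^2) := by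
          apply Finset.sum_le_sum
          intro d hd
          have := hE d hd
          linarith
      _ = 2 * ((2/lam)^K * t^2) * ∑ d ∈ Finset.Icc d₀ n, ((d:ℝ)⁻¹)^2 := by
          rw [Finset.mul_sum]
          apply Finset.sum_congr rfl
          intro d _
          ring
      _ ≤ 2 * ((2/lam)^K * t^2) * (2 / d₀) := by
          apply mul_le_mul_of_nonneg_left (sum_inv_sq_le d₀ n hd₀1) (by positivity)
      _ ≤ 2 * ((2/lam)^K * t^2) * (2 / r) := by
          apply mul_le_mul_of_nonneg_left _ (by positivity)
          apply div_le_div_of_nonneg_left (by norm_num) hlt hrd₀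
      _ = 2 * ((2/lam)^K * t^2 * (2 / r)) := by ring
  -- Step G : lower bound on total sum
  have hlow : ((n:ℝ)/(8*B')) * (1/2)^F ≤ ∑ f : ZMod n, What n B' F f := by
    set low := Finset.univ.filter (fun f : ZMod n => 8 * B' * cdist n f ≤ n) with hlowdef
    have h1 : ((low.card : ℕ):ℝ) * (1/2)^F ≤ ∑ f ∈ low, What n B' F f := by
      have := Finset.card_nsmul_le_sum low (What n B' F) ((1/2:ℝ)^F)
        (fun f hf => What_ge n B' F m hB hm f (by
          rw [hlowdef, Finset.mem_filter] at hf
          exact hf.2))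
      simpa [nsmul_eq_mul] using this
    have h2 : ∑ f ∈ low, What n B' F f ≤ ∑ f : ZMod n, What n B' F f := by
      apply Finset.sum_le_sum_of_subset_of_nonneg (Finset.filter_subset _ _)
      intro f _ _
      exact What_nonneg n B' F hFe f
    have h3 := card_low n B' hB2 hnB
    calc ((n:ℝ)/(8*B')) * (1/2)^F ≤ ((low.card : ℕ):ℝ) * (1/2)^F := by
          apply mul_le_mul_of_nonneg_right h3 (by positivity)
      _ ≤ _ := le_trans h1 h2
  -- Step H : numeric comparison
  have hnum : 2 * ((2/lam)^K * t^2 * (2 / r)) ≤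
      (256/lam)^(K+1) * (((n:ℝ)/(8*B')) * (1/2)^F) := by
    have e1 : 2 * ((2/lam)^K * t^2 * (2 / r)) = t * (8/lam * (2/lam)^K) := by
      rw [hr, ht]
      field_simp
      ring
    have epow : (256/lam)^K * ((1:ℝ)/2)^K = (128/lam)^K := by
      rw [← mul_pow]
      congr 1
      field_simp
      ring
    have e2 : (256/lam)^(K+1) * (((n:ℝ)/(8*B')) * (1/2)^F) = t * (8/lam * (128/lam)^K) := by
      rw [hF, show K + 2 = (K+1)+1 by ring]
      rw [pow_succ, pow_succ, pow_succ, ← epow, ht]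
      field_simp
      ring
    rw [e1, e2]
    apply mul_le_mul_of_nonneg_left _ ht0.le
    apply mul_le_mul_of_nonneg_left _ (by positivity)
    apply pow_le_pow_left₀ (by positivity)
    rw [div_le_div_iff_of_pos_right hlam0]
    norm_num
  -- assemble
  rw [hF1]
  calc ∑ f ∈ T, What n B' F f
      ≤ 2 * ((2/lam)^K * t^2 * (2 / r)) := by
        refine le_trans hA (le_trans (le_of_eq hB') (le_trans hC (le_trans hD hF')))
    _ ≤ (256/lam)^(K+1) * (((n:ℝ)/(8*B')) * (1/2)^F) := hnum
    _ ≤ (256/lam)^(K+1) * ∑ f : ZMod n, What n B' F f := by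
        apply mul_le_mul_of_nonneg_left hlow (by positivity)
end

section
/- With Ŵ as defined, for every f ∈ [n] with f ≠ 0 one has Ŵ_f ≤ (n/(B'·|f|))^F. -/
set_option maxHeartbeats 1000000

open Finset

lemma exp_fact (θ : ℂ) : Complex.exp (θ*Complex.I) - 1
    = Complex.exp (θ/2*Complex.I) * (2 * Complex.sin (θ/2) * Complex.I) := by
  rw [Complex.sin]
  have h1 : Complex.exp (θ*Complex.I) = Complex.exp (θ/2*Complex.I) * Complex.exp (θ/2*Complex.I) := by
    rw [← Complex.exp_add]; ring_nf
  have h2 : Complex.exp (θ/2*Complex.I) * Complex.exp (-(θ/2)*Complex.I) = 1 := by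
    rw [← Complex.exp_add]; ring_nf; exact Complex.exp_zero
  have h3 : Complex.I^2 = -1 := Complex.I_sq
  linear_combination h1 + (Complex.exp (θ/2*Complex.I)^2 - Complex.exp (θ/2*Complex.I)*Complex.exp (-(θ/2)*Complex.I)) * h3 + h2

lemma abs_exp_sub_one (x : ℝ) :
    ‖Complex.exp (x * Complex.I) - 1‖ = 2 * |Real.sin (x/2)| := by
  rw [exp_fact]
  have : ((x:ℂ))/2 = ((x/2 : ℝ) : ℂ) := by push_cast; ring
  rw [this, norm_mul, Complex.norm_exp_ofReal_mul_I, one_mul, ← Complex.ofReal_sin,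
    norm_mul, norm_mul, Complex.norm_I, Complex.norm_real, Real.norm_eq_abs, Complex.norm_two, mul_one]

lemma geom_bound (w : ℂ) (hw : ‖w‖ = 1) (hw1 : w ≠ 1) (m : ℕ) :
    ‖∑ a ∈ Finset.range m, w^a‖ ≤ 2 / ‖w - 1‖ := by
  rw [geom_sum_eq hw1, norm_div]
  gcongr
  calc ‖w^m - 1‖ ≤ ‖w^m‖ + 1 := by
        simpa using (norm_sub_le (w^m) 1)
    _ ≤ 2 := by rw [norm_pow, hw]; norm_num

lemma jordan_aux (n m : ℕ) (hn : 0 < n) (h : 2*m ≤ n) :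
    2*(m:ℝ)/n ≤ Real.sin (Real.pi * m / n) := by
  have hπ := Real.pi_pos
  have hnR : (0:ℝ) < n := by exact_mod_cast hn
  have hmn : (2:ℝ) * m ≤ n := by exact_mod_cast h
  have key := Real.mul_le_sin (x := Real.pi * m / n) (by positivity)
    (by rw [div_le_iff₀ hnR]; nlinarith)
  calc 2*(m:ℝ)/n = 2/Real.pi * (Real.pi * m/n) := by field_simp
    _ ≤ _ := key

/-- For every `f ∈ [n]` with `f ≠ 0`, `Ŵ_f ≤ (n/(B'|f|))^F`. -/
theorem What_le_decay (n B' F : ℕ) [NeZero n]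
    (hn : ∃ k, n = 2 ^ k) (hB' : ∃ k, B' = 2 ^ k)
    (hB2 : 2 ≤ B') (hBn : 2 * B' ≤ n) (hF2 : 2 ≤ F) (hFe : Even F)
    (f : ZMod n) (hf : f ≠ 0) :
    What n B' F f ≤ ((n : ℝ) / ((B' : ℝ) * (cdist n f : ℝ))) ^ F := by
  have hn0 : 0 < n := Nat.pos_of_ne_zero (NeZero.ne n)
  set v : ℕ := f.val with hv
  have hv0 : 0 < v := by
    rcases Nat.eq_zero_or_pos v with h | h
    · exact absurd ((ZMod.val_eq_zero f).mp h) hf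
    · exact h
  have hvn : v < n := ZMod.val_lt f
  set d : ℕ := cdist n f with hd
  have hd_def : d = min v (n - v) := rfl
  have hd1 : 1 ≤ d := by
    rw [hd_def]; exact le_min hv0 (by omega)
  have hdv : d ≤ v := hd_def ▸ min_le_left _ _
  have hdnv : d ≤ n - v := hd_def ▸ min_le_right _ _
  have h2d : 2 * d ≤ n := by omega
  have hBeven : 2 * (B' / 2) = B' := by
    obtain ⟨k, rfl⟩ := hB'
    rcases k with _ | k'
    · simp at hB2
    · rw [pow_succ]; omega
  set K : ℕ := B' / 2 with hK
  have hK1 : 1 ≤ K := by omega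
  have hKcast : ((B' : ℤ) / 2) = (K : ℤ) := by omega
  set θ : ℝ := 2 * Real.pi * v / n with hθ
  set w : ℂ := Complex.exp ((θ : ℂ) * Complex.I) with hw
  have hw0 : w ≠ 0 := Complex.exp_ne_zero _
  have hwabs : ‖w‖ = 1 := Complex.norm_exp_ofReal_mul_I θ
  have hπ := Real.pi_pos
  have hnR : (0:ℝ) < n := by exact_mod_cast hn0
  have hvR : (0:ℝ) < v := by exact_mod_cast hv0
  have hvnR : (v:ℝ) < n := by exact_mod_cast hvn
  have hw1 : w ≠ 1 := by
    intro hcon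
    rw [hw, Complex.exp_eq_one_iff] at hcon
    obtain ⟨m, hm⟩ := hcon
    have hm' : (θ:ℂ) * Complex.I = ((2 * Real.pi * m : ℝ) : ℂ) * Complex.I := by
      rw [hm]; push_cast; ring
    have hm'' : θ = 2 * Real.pi * m := by
      exact_mod_cast mul_right_cancel₀ Complex.I_ne_zero hm'
    have hθpos : 0 < θ := by rw [hθ]; positivity
    have hθlt : θ < 2 * Real.pi := by
      rw [hθ, div_lt_iff₀ hnR]; nlinarith
    have hm0 : (0 : ℝ) < (m:ℝ) := by nlinarith
    have hm1 : (m : ℝ) < 1 := by nlinarith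
    have h1 : (0 : ℤ) < m := by exact_mod_cast hm0
    have h2 : m < 1 := by exact_mod_cast hm1
    omega
  have hterm : ∀ f' : ℤ,
      Complex.exp (2 * Real.pi * Complex.I * (v : ℂ) * (f' : ℂ) / (n : ℂ)) = w ^ f' := by
    intro f'
    rw [hw, ← Complex.exp_int_mul]
    congr 1
    rw [hθ]
    push_cast
    field_simp
  set S : ℂ := ∑ f' ∈ Finset.Ioo (-((B' : ℤ) / 2)) ((B' : ℤ) / 2),
      Complex.exp (2 * Real.pi * Complex.I * (v : ℂ) * (f' : ℂ) / (n : ℂ)) with hS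
  have hSsum : S = ∑ f' ∈ Finset.Ioo (-(K : ℤ)) (K : ℤ), w ^ f' := by
    rw [hS, hKcast]
    exact Finset.sum_congr rfl fun f' _ => hterm f'
  have hreindex : (∑ f' ∈ Finset.Ioo (-(K : ℤ)) (K : ℤ), w ^ f')
      = w ^ (1 - (K : ℤ)) * ∑ a ∈ Finset.range (2 * K - 1), w ^ a := by
    rw [Finset.mul_sum]
    refine Finset.sum_nbij' (fun f' => (f' + (K : ℤ) - 1).toNat) (fun a => (a : ℤ) - (K : ℤ) + 1)
      ?_ ?_ ?_ ?_ ?_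
    · intro a ha
      simp only [Finset.mem_Ioo] at ha
      simp only [Finset.mem_range]
      omega
    · intro a ha
      simp only [Finset.mem_range] at ha
      simp only [Finset.mem_Ioo]
      omega
    · intro a ha
      simp only [Finset.mem_Ioo] at ha
      omega
    · intro a ha
      simp only [Finset.mem_range] at ha
      omega
    · intro a ha
      simp only [Finset.mem_Ioo] at ha
      rw [← zpow_natCast w ((a + (K:ℤ) - 1).toNat), ← zpow_add₀ hw0]
      congr 1
      omega
  have hSabs : ‖S‖ ≤ 2 / ‖w - 1‖ := by
    rw [hSsum, hreindex, norm_mul, norm_zpow, hwabs, one_zpow, one_mul]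
    exact geom_bound w hwabs hw1 _
  have hsin_pos : 0 < Real.sin (Real.pi * v / n) := by
    apply Real.sin_pos_of_pos_of_lt_pi
    · positivity
    · rw [div_lt_iff₀ hnR]; nlinarith
  have hwm1 : ‖w - 1‖ = 2 * Real.sin (Real.pi * v / n) := by
    rw [hw, abs_exp_sub_one]
    congr 1
    rw [abs_of_nonneg]
    · congr 1; rw [hθ]; ring
    · have h : θ / 2 = Real.pi * v / n := by rw [hθ]; ring
      rw [h]; exact hsin_pos.le
  have hsin_ge : 2 * (d : ℝ) / n ≤ Real.sin (Real.pi * v / n) := by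
    rcases le_or_gt v (n - v) with hcase | hcase
    · have hdveq : d = v := by omega
      rw [hdveq]
      exact jordan_aux n v hn0 (by omega)
    · have hdveq : d = n - v := by omega
      have hcast : ((n - v : ℕ) : ℝ) = (n:ℝ) - v := by
        push_cast [Nat.cast_sub hvn.le]; ring
      have heq : Real.sin (Real.pi * v / n) = Real.sin (Real.pi * ((n - v : ℕ):ℝ) / n) := by
        rw [hcast, show Real.pi * ((n:ℝ) - v) / n = Real.pi - Real.pi * v / n by
          field_simp, Real.sin_pi_sub]
      rw [hdveq, heq]
      exact jordan_aux n (n - v) hn0 (by omega)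
  have hdR : (0:ℝ) < d := by exact_mod_cast hd1
  have hSabs' : ‖S‖ ≤ (n : ℝ) / (2 * d) := by
    refine hSabs.trans ?_
    rw [hwm1, div_le_div_iff₀ (by positivity) (by positivity)]
    nlinarith [(div_le_iff₀ hnR).mp hsin_ge]
  have hBR : (2:ℝ) ≤ B' := by exact_mod_cast hB2
  have hkey : |((B' : ℝ) - 1)⁻¹ * S.re| ≤ (n : ℝ) / ((B' : ℝ) * d) := by
    rw [abs_mul, abs_inv]
    rw [abs_of_nonneg (by linarith : (0:ℝ) ≤ (B':ℝ) - 1)]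
    have hre : |S.re| ≤ (n : ℝ) / (2 * d) :=
      (Complex.abs_re_le_norm S).trans hSabs'
    calc ((B':ℝ) - 1)⁻¹ * |S.re| ≤ ((B':ℝ) - 1)⁻¹ * ((n:ℝ) / (2*d)) := by
          apply mul_le_mul_of_nonneg_left hre
          have : (0:ℝ) < (B':ℝ) - 1 := by linarith
          positivity
      _ = (n : ℝ) / (2 * d * ((B':ℝ) - 1)) := by
          rw [inv_mul_eq_div, div_div]
      _ ≤ (n : ℝ) / ((B' : ℝ) * d) := by
          apply div_le_div_of_nonneg_left hnR.le (by positivity)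
          nlinarith [mul_nonneg hdR.le (by linarith : (0:ℝ) ≤ (B':ℝ) - 2)]
  have hWhat : What n B' F f = (((B' : ℝ) - 1)⁻¹ * S.re) ^ F := rfl
  rw [hWhat, ← hFe.pow_abs]
  exact pow_le_pow_left₀ (abs_nonneg _) hkey F
end

section
/- With Ŵ as defined, for every f ∈ [n] with |f| ≤ n/(2B') one has Ŵ_f ≥ (2/π)^F. -/
open Finset

lemma dirichlet_kernel_sin_mul (M : ℕ) (hM : 1 ≤ M) (x : ℝ) :
    Real.sin x * ∑ f' ∈ Finset.Ioo (-(M : ℤ)) (M : ℤ), Real.cos (2 * x * (f' : ℝ))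
      = Real.sin ((2 * (M : ℝ) - 1) * x) := by
  induction M, hM using Nat.le_induction with
  | base =>
      have h : Finset.Ioo (-(1 : ℤ)) (1 : ℤ) = {0} := by decide
      simp only [Nat.cast_one] at *
      rw [h]
      simp
      ring_nf
  | succ M hM ih =>
      have hset : Finset.Ioo (-((M + 1 : ℕ) : ℤ)) ((M + 1 : ℕ) : ℤ)
          = insert (-(M : ℤ)) (insert (M : ℤ) (Finset.Ioo (-(M : ℤ)) (M : ℤ))) := by
        ext a
        simp only [Finset.mem_Ioo, Finset.mem_insert]
        push_cast
        omega
      have hne1 : (-(M : ℤ)) ∉ insert (M : ℤ) (Finset.Ioo (-(M : ℤ)) (M : ℤ)) := by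
        simp only [Finset.mem_insert, Finset.mem_Ioo]
        omega
      have hne2 : (M : ℤ) ∉ Finset.Ioo (-(M : ℤ)) (M : ℤ) := by
        simp [Finset.mem_Ioo]
      rw [hset, Finset.sum_insert hne1, Finset.sum_insert hne2]
      have hid : Real.sin ((2 * ((M : ℝ) + 1) - 1) * x) - Real.sin ((2 * (M : ℝ) - 1) * x)
          = 2 * Real.sin x * Real.cos (2 * x * (M : ℝ)) := by
        rw [Real.sin_sub_sin]
        ring_nf
      push_cast
      rw [show 2 * x * -(M : ℝ) = -(2 * x * (M : ℝ)) from by ring, Real.cos_neg]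
      linear_combination ih - hid

/-- For every `f ∈ [n]` with `|f| ≤ n/(2B')`, `Ŵ_f ≥ (2/π)^F`. -/
theorem What_pass_lower (n B' F : ℕ) [NeZero n]
    (hn : ∃ k, n = 2 ^ k) (hB' : ∃ k, B' = 2 ^ k)
    (hB2 : 2 ≤ B') (hBn : 2 * B' ≤ n) (hF2 : 2 ≤ F) (hFe : Even F)
    (f : ZMod n) (hf : (cdist n f : ℝ) ≤ (n : ℝ) / (2 * B')) :
    (2 / Real.pi) ^ F ≤ What n B' F f := by
  have hπ := Real.pi_pos
  have hn0 : 0 < n := Nat.pos_of_ne_zero (NeZero.ne n)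
  -- B' = 2 * M
  obtain ⟨k, hk⟩ := hB'
  have hk1 : 1 ≤ k := by
    by_contra h
    interval_cases k <;> omega
  set M : ℕ := B' / 2 with hMdef
  have hB'M : B' = 2 * M := by
    subst hk
    obtain ⟨k', rfl⟩ : ∃ k', k = k' + 1 := ⟨k - 1, by omega⟩
    simp [hMdef, pow_succ, Nat.mul_comm]
  have hM1 : 1 ≤ M := by omega
  have hhalf : ((B' : ℤ) / 2) = (M : ℤ) := by
    rw [hB'M]; push_cast; omega
  set v : ℕ := f.val with hv
  set d : ℕ := cdist n f with hd
  have hvn : v < n := ZMod.val_lt f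
  set x : ℝ := Real.pi * d / n with hx
  -- real part of the exponential sum is the cosine sum
  have hre : (∑ f' ∈ Finset.Ioo (-((B' : ℤ) / 2)) ((B' : ℤ) / 2),
      Complex.exp (2 * Real.pi * Complex.I * (v : ℂ) * (f' : ℂ) / (n : ℂ))).re
      = ∑ f' ∈ Finset.Ioo (-(M : ℤ)) (M : ℤ), Real.cos (2 * x * (f' : ℝ)) := by
    rw [hhalf, Complex.re_sum]
    refine Finset.sum_congr rfl fun f' _ => ?_
    have harg : (2 * Real.pi * Complex.I * (v : ℂ) * (f' : ℂ) / (n : ℂ))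
        = ((2 * Real.pi * v * f' / n : ℝ) : ℂ) * Complex.I := by
      push_cast
      ring
    rw [harg, Complex.exp_ofReal_mul_I_re]
    -- cos (2π v f'/n) = cos (2 x f')
    rcases min_cases v (n - v) with ⟨h1, _⟩ | ⟨h1, h2⟩
    · have hdv : (d : ℝ) = (v : ℝ) := by rw [hd]; unfold cdist; rw [← hv, h1]
      have harg2 : (2 * Real.pi * (v : ℝ) * f' / n) = 2 * x * f' := by
        rw [hx, hdv]; ring
      rw [harg2]
    · have hdv : (d : ℝ) = (n : ℝ) - v := by
        rw [hd]; unfold cdist; rw [← hv, h1]; push_cast [Nat.le_of_lt hvn]; ring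
      have harg2 : (2 * Real.pi * (v : ℝ) * f' / n : ℝ)
          = (f' : ℤ) * (2 * Real.pi) - 2 * x * f' := by
        rw [hx, hdv]
        field_simp
        ring
      rw [harg2, Real.cos_int_mul_two_pi_sub]
  -- key lower bound for the normalized cosine sum
  have hcard : ((2 : ℝ) * M - 1) = (B' : ℝ) - 1 := by rw [hB'M]; push_cast; ring
  have hkey : 2 / Real.pi ≤ ((B' : ℝ) - 1)⁻¹ *
      ∑ f' ∈ Finset.Ioo (-(M : ℤ)) (M : ℤ), Real.cos (2 * x * (f' : ℝ)) := by
    have hdir := dirichlet_kernel_sin_mul M hM1 x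
    set S : ℝ := ∑ f' ∈ Finset.Ioo (-(M : ℤ)) (M : ℤ), Real.cos (2 * x * (f' : ℝ)) with hS
    have hB'pos : (0 : ℝ) < (B' : ℝ) - 1 := by
      have : (2 : ℝ) ≤ B' := by exact_mod_cast hB2
      linarith
    rcases Nat.eq_zero_or_pos d with hd0 | hdpos
    · -- d = 0 : all cosines are 1
      have hx0 : x = 0 := by rw [hx, hd0]; simp
      have hcardIoo : (Finset.Ioo (-(M : ℤ)) (M : ℤ)).card = 2 * M - 1 := by
        rw [Int.card_Ioo]
        omega
      have hSval : S = ((B' : ℝ) - 1) := by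
        rw [hS, hx0]
        simp only [mul_zero, zero_mul, Real.cos_zero, Finset.sum_const, nsmul_eq_mul, mul_one]
        rw [hcardIoo, Nat.cast_sub (by omega : 1 ≤ 2 * M)]
        rw [← hcard]
        push_cast
        ring
      rw [hSval, inv_mul_cancel₀ (ne_of_gt hB'pos)]
      rw [div_le_one hπ]
      linarith [Real.pi_gt_three]
    · -- d ≥ 1
      have hd1 : (1 : ℝ) ≤ d := by exact_mod_cast hdpos
      have hxpos : 0 < x := by
        rw [hx]
        positivity
      have hxle : x ≤ Real.pi / (2 * B') := by
        rw [hx, div_le_div_iff₀ (by positivity) (by positivity)]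
        calc Real.pi * d * (2 * B') = (2 * B') * d * Real.pi := by ring
          _ ≤ (n : ℝ) * Real.pi := by
              have h2B : (0 : ℝ) < 2 * B' := by positivity
              have : (2 * (B' : ℝ)) * d ≤ n := (le_div_iff₀' h2B).mp hf
              nlinarith
          _ = Real.pi * n := by ring
      have hMx : (2 * (M : ℝ) - 1) * x ≤ Real.pi / 2 := by
        have h1 : (2 * (M : ℝ) - 1) * x ≤ (2 * M) * x := by nlinarith
        have h2 : (2 * (M : ℝ)) * x ≤ (2 * M) * (Real.pi / (2 * B')) := by
          have : (0 : ℝ) < 2 * M := by positivity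
          nlinarith
        have h3 : (2 * (M : ℝ)) * (Real.pi / (2 * B')) = Real.pi / 2 := by
          rw [hB'M]
          push_cast
          have : (0 : ℝ) < M := by positivity
          field_simp
        linarith
      have hM2 : (0 : ℝ) < 2 * (M : ℝ) - 1 := by
        have : (1 : ℝ) ≤ M := by exact_mod_cast hM1
        linarith
      have hMxpos : 0 ≤ (2 * (M : ℝ) - 1) * x := by nlinarith
      have hjordan : 2 / Real.pi * ((2 * (M : ℝ) - 1) * x) ≤ Real.sin ((2 * (M : ℝ) - 1) * x) :=
        Real.mul_le_sin hMxpos hMx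
      have hsinx_le : Real.sin x ≤ x := Real.sin_le hxpos.le
      have hsinx_pos : 0 < Real.sin x := by
        apply Real.sin_pos_of_pos_of_lt_pi hxpos
        calc x ≤ Real.pi / (2 * B') := hxle
          _ < Real.pi := by
              rw [div_lt_iff₀ (by positivity)]
              have : (2 : ℝ) ≤ B' := by exact_mod_cast hB2
              nlinarith
      have hSlb : 2 / Real.pi * (2 * (M : ℝ) - 1) ≤ S := by
        apply le_of_mul_le_mul_right _ hsinx_pos
        calc 2 / Real.pi * (2 * (M : ℝ) - 1) * Real.sin x
            ≤ 2 / Real.pi * (2 * (M : ℝ) - 1) * x :=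
              mul_le_mul_of_nonneg_left hsinx_le (by positivity)
          _ = 2 / Real.pi * ((2 * (M : ℝ) - 1) * x) := by ring
          _ ≤ Real.sin ((2 * (M : ℝ) - 1) * x) := hjordan
          _ = S * Real.sin x := by rw [← hdir]; ring
      rw [← hcard]
      calc 2 / Real.pi = (2 * (M : ℝ) - 1)⁻¹ * (2 / Real.pi * (2 * (M : ℝ) - 1)) := by
            field_simp
          _ ≤ (2 * (M : ℝ) - 1)⁻¹ * S :=
            mul_le_mul_of_nonneg_left hSlb (by positivity)
  -- conclude
  unfold What
  rw [← hv, hre]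
  exact pow_le_pow_left₀ (by positivity) hkey F
end

section
/- Let n be a power of two and let σ be chosen uniformly at random from the odd numbers in [n]; define π(i) = σ·i (mod n). Then π is an approximately pairwise-independent random permutation: for all distinct i, i' ∈ [n] and every integer t ≥ 0, ℙ_σ[|π(i) − π(i')| ≤ t] ≤ 4t/n, where |·| denotes the circular (modulo-n) distance. -/
open Finset

-- count of x in ZMod 2^k with x ≠ 0, 2^a ∣ x.val, cdist ≤ t
lemma count_T (k a t : ℕ) (ha : a ≤ k) :
    ((univ.filter (fun x : ZMod (2^k) => x ≠ 0 ∧ 2^a ∣ x.val ∧ cdist (2^k) x ≤ t)).card)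
      ≤ 2 * (t / 2^a) := by
  haveI : NeZero (2^k) := ⟨pow_ne_zero k two_ne_zero⟩
  set s := t / 2^a with hs
  have hpa : 0 < 2^a := pow_pos two_pos a
  have hdn : 2^a ∣ 2^k := pow_dvd_pow 2 ha
  have := Finset.card_le_card_of_injOn
    (f := fun x : ZMod (2^k) =>
      (if x.val ≤ t then (x.val / 2^a - 1, true) else ((2^k - x.val) / 2^a - 1, false)))
    (s := (univ.filter (fun x : ZMod (2^k) => x ≠ 0 ∧ 2^a ∣ x.val ∧ cdist (2^k) x ≤ t)))
    (t := (Finset.range s) ×ˢ (univ : Finset Bool)) ?_ ?_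
  · calc _ ≤ _ := this
    _ = 2 * s := by simp [Finset.card_product, mul_comm]
  · intro x hx
    simp only [Finset.mem_coe, mem_filter, mem_univ, true_and] at hx
    obtain ⟨hx0, hxd, hxc⟩ := hx
    have hvne : x.val ≠ 0 := fun h => hx0 ((ZMod.val_eq_zero x).1 h)
    have hvlt : x.val < 2^k := ZMod.val_lt x
    by_cases h : x.val ≤ t
    · simp only [Finset.mem_coe, if_pos h, Finset.mem_product, Finset.mem_range, mem_univ, and_true]
      have h1 : 2^a ≤ x.val := Nat.le_of_dvd (Nat.pos_of_ne_zero hvne) hxd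
      have h2 : 1 ≤ x.val / 2^a := (Nat.one_le_div_iff hpa).2 h1
      have h3 : x.val / 2^a ≤ s := Nat.div_le_div_right h
      omega
    · simp only [Finset.mem_coe, if_neg h, Finset.mem_product, Finset.mem_range, mem_univ, and_true]
      have hyc : 2^k - x.val ≤ t := by
        unfold cdist at hxc; omega
      have hyd : 2^a ∣ 2^k - x.val := Nat.dvd_sub hdn hxd
      have h1 : 2^a ≤ 2^k - x.val := Nat.le_of_dvd (by omega) hyd
      have h2 : 1 ≤ (2^k - x.val) / 2^a := (Nat.one_le_div_iff hpa).2 h1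
      have h3 : (2^k - x.val) / 2^a ≤ s := Nat.div_le_div_right hyc
      omega
  · intro x hx y hy hxy
    simp only [coe_filter, Set.mem_setOf_eq, mem_univ, true_and] at hx hy
    obtain ⟨hx0, hxd, hxc⟩ := hx
    obtain ⟨hy0, hyd, hyc⟩ := hy
    have hvx : x.val ≠ 0 := fun h => hx0 ((ZMod.val_eq_zero x).1 h)
    have hvy : y.val ≠ 0 := fun h => hy0 ((ZMod.val_eq_zero y).1 h)
    have hvxl : x.val < 2^k := ZMod.val_lt x
    have hvyl : y.val < 2^k := ZMod.val_lt y
    apply ZMod.val_injective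
    by_cases h1 : x.val ≤ t <;> by_cases h2 : y.val ≤ t <;>
      simp only [if_pos, if_neg, h1, h2, Prod.mk.injEq, if_true, if_false] at hxy
    · -- both small branch
      obtain ⟨hv, -⟩ := hxy
      have e1 : 2^a * (x.val / 2^a) = x.val := Nat.mul_div_cancel' hxd
      have e2 : 2^a * (y.val / 2^a) = y.val := Nat.mul_div_cancel' hyd
      have h3 : 1 ≤ x.val / 2^a := (Nat.one_le_div_iff hpa).2 (Nat.le_of_dvd (by omega) hxd)
      have h4 : 1 ≤ y.val / 2^a := (Nat.one_le_div_iff hpa).2 (Nat.le_of_dvd (by omega) hyd)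
      have hq : x.val / 2^a = y.val / 2^a := by omega
      rw [← e1, ← e2, hq]
    · simp at hxy
    · simp at hxy
    · obtain ⟨hv, -⟩ := hxy
      have hxd' : 2^a ∣ 2^k - x.val := Nat.dvd_sub hdn hxd
      have hyd' : 2^a ∣ 2^k - y.val := Nat.dvd_sub hdn hyd
      have e1 : 2^a * ((2^k - x.val) / 2^a) = 2^k - x.val := Nat.mul_div_cancel' hxd'
      have e2 : 2^a * ((2^k - y.val) / 2^a) = 2^k - y.val := Nat.mul_div_cancel' hyd'
      have h3 : 1 ≤ (2^k - x.val) / 2^a := (Nat.one_le_div_iff hpa).2 (Nat.le_of_dvd (by omega) hxd')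
      have h4 : 1 ≤ (2^k - y.val) / 2^a := (Nat.one_le_div_iff hpa).2 (Nat.le_of_dvd (by omega) hyd')
      have hq : (2^k - x.val) / 2^a = (2^k - y.val) / 2^a := by omega
      have : 2^k - x.val = 2^k - y.val := by rw [← e1, ← e2, hq]
      omega

/-- For `n` a power of two and `σ` uniform over the odd numbers in `[n]`, the map
`π(i) = σ·i (mod n)` is approximately pairwise-independent: for all distinct `i, i'`
and every `t ≥ 0`, `ℙ_σ[|π(i) − π(i')| ≤ t] ≤ 4t/n` (circular distance). -/
theorem mul_perm_approx_pairwise_independent (n : ℕ) [NeZero n]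
    (hn : ∃ k, n = 2 ^ k) (i i' : ZMod n) (hii : i ≠ i') (t : ℕ) :
    ((Finset.univ.filter
        (fun σ : ZMod n => σ.val % 2 = 1 ∧ cdist n (σ * i - σ * i') ≤ t)).card : ℝ) /
      ((Finset.univ.filter (fun σ : ZMod n => σ.val % 2 = 1)).card : ℝ) ≤
      4 * t / n := by
  obtain ⟨k, rfl⟩ := hn
  have hk : 1 ≤ k := by
    by_contra h
    have hk0 : k = 0 := by omega
    subst hk0
    refine hii (ZMod.val_injective _ ?_)
    have h1 := ZMod.val_lt i
    have h2 := ZMod.val_lt i'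
    simp only [pow_zero] at h1 h2
    omega
  have hnpos : 0 < 2^k := pow_pos two_pos k
  set d : ZMod (2^k) := i - i' with hd
  have hd0 : d ≠ 0 := sub_ne_zero.mpr hii
  have hdv : d.val ≠ 0 := fun h => hd0 ((ZMod.val_eq_zero d).1 h)
  set a := (d.val).factorization 2 with ha
  set m := d.val / 2^a with hm
  have hdm : 2^a * m = d.val := Nat.ordProj_mul_ordCompl_eq_self d.val 2
  have hmodd : ¬ 2 ∣ m := Nat.not_dvd_ordCompl Nat.prime_two hdv
  have hak : a < k := by
    have h1 : 2^a ≤ d.val := Nat.ordProj_le 2 hdv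
    have h2 : d.val < 2^k := ZMod.val_lt d
    exact (Nat.pow_lt_pow_iff_right one_lt_two).1 (lt_of_le_of_lt h1 h2)
  have hpa : 0 < 2^a := pow_pos two_pos a
  have hmunit : IsUnit ((m : ℕ) : ZMod (2^k)) := by
    rw [ZMod.isUnit_iff_coprime]
    exact Nat.Coprime.pow_right k (Nat.coprime_comm.1 (Nat.prime_two.coprime_iff_not_dvd.2 hmodd))
  have hdcast : d = ((2^a * m : ℕ) : ZMod (2^k)) := by
    rw [hdm, ZMod.natCast_val, ZMod.cast_id]
  set S := univ.filter (fun σ : ZMod (2^k) => σ.val % 2 = 1 ∧ cdist (2^k) (σ * i - σ * i') ≤ t) with hS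
  set T := univ.filter (fun x : ZMod (2^k) => x ≠ 0 ∧ 2^a ∣ x.val ∧ cdist (2^k) x ≤ t) with hT
  set f : ZMod (2^k) → ZMod (2^k) := fun σ => σ * d with hf
  have hSunit : ∀ σ ∈ S, IsUnit σ := by
    intro σ hσ
    simp only [hS, mem_filter, mem_univ, true_and] at hσ
    have hσc : σ = ((σ.val : ℕ) : ZMod (2^k)) := by rw [ZMod.natCast_val, ZMod.cast_id]
    rw [hσc, ZMod.isUnit_iff_coprime]
    refine Nat.Coprime.pow_right k ?_
    rw [Nat.coprime_comm]
    refine Nat.prime_two.coprime_iff_not_dvd.2 ?_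
    omega
  have himg : S.image f ⊆ T := by
    intro y hy
    simp only [Finset.mem_image] at hy
    obtain ⟨σ, hσS, rfl⟩ := hy
    have hu := hSunit σ hσS
    simp only [hS, mem_filter, mem_univ, true_and] at hσS
    obtain ⟨hodd, hcd⟩ := hσS
    have hcd' : cdist (2^k) (σ * d) ≤ t := by rw [hd, mul_sub]; exact hcd
    simp only [hT, mem_filter, mem_univ, true_and, hf]
    refine ⟨?_, ?_, hcd'⟩
    · intro h
      refine hd0 ?_
      obtain ⟨u, rfl⟩ := hu
      have h2 := congrArg (fun z => (↑u⁻¹ : ZMod (2^k)) * z) h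
      simpa [← mul_assoc] using h2
    · have hdvdn : (2^a : ℕ) ∣ 2^k := pow_dvd_pow 2 hak.le
      haveI : NeZero (2^a) := ⟨pow_ne_zero a two_ne_zero⟩
      have hexp : σ * d = ((2^a : ℕ) : ZMod (2^k)) * (σ * (m : ℕ)) := by
        rw [hdcast]; push_cast; ring
      have hzero : (((σ * d).val : ℕ) : ZMod (2^a)) = 0 := by
        have h1 : ((ZMod.castHom hdvdn (ZMod (2^a))) (σ * d)) = 0 := by
          rw [hexp, map_mul, map_natCast, ZMod.natCast_self, zero_mul]
        rw [ZMod.natCast_val, ← ZMod.castHom_apply (h := hdvdn)]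
        exact h1
      exact (ZMod.natCast_eq_zero_iff _ _).1 hzero
  have hfib : ∀ y ∈ S.image f, (S.filter (fun σ => f σ = y)).card ≤ 2^a := by
    intro y hy
    have hdvdn' : (2^(k-a) : ℕ) ∣ 2^k := pow_dvd_pow 2 (by omega)
    haveI : NeZero (2^(k-a)) := ⟨pow_ne_zero _ two_ne_zero⟩
    have hn2 : (2:ℕ)^k = 2^(k-a) * 2^a := by rw [← pow_add]; congr 1; omega
    calc (S.filter (fun σ => f σ = y)).card ≤ (Finset.range (2^a)).card := by
          refine Finset.card_le_card_of_injOn (fun σ => σ.val / 2^(k-a)) (fun σ hσ => ?_) ?_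
          · simp only [Finset.mem_coe, Finset.mem_range]
            have hlt : σ.val < 2^k := ZMod.val_lt σ
            exact Nat.div_lt_of_lt_mul (by omega)
          · intro x hx y' hy' hxy
            simp only [coe_filter, Set.mem_setOf_eq] at hx hy'
            obtain ⟨-, hfx⟩ := hx
            obtain ⟨-, hfy⟩ := hy'
            have heq : (x - y') * d = 0 := by
              rw [sub_mul, show x * d = f x from rfl, show y' * d = f y' from rfl, hfx, hfy,
                sub_self]
            have heq2 : (x - y') * ((2^a : ℕ) : ZMod (2^k)) = 0 := by
              rw [hdcast] at heq
              push_cast at heq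
              obtain ⟨u, hu⟩ := hmunit
              have h2 := congrArg (fun z => z * (↑u⁻¹ : ZMod (2^k))) heq
              simp only [zero_mul] at h2
              rw [mul_assoc, mul_assoc, ← hu] at h2
              simpa [mul_assoc] using h2
            have heq3 : (((x - y').val * 2^a : ℕ) : ZMod (2^k)) = 0 := by
              push_cast
              rw [ZMod.natCast_val, ZMod.cast_id]
              exact_mod_cast heq2
            have hdvd : 2^k ∣ (x - y').val * 2^a := (ZMod.natCast_eq_zero_iff _ _).1 heq3
            have hdvd2 : 2^(k-a) ∣ (x - y').val := by
              have hdvd' : 2^(k-a) * 2^a ∣ (x - y').val * 2^a := by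
                rw [← hn2]; exact hdvd
              exact (Nat.mul_dvd_mul_iff_right hpa).1 hdvd'

            have hmod : x.val % 2^(k-a) = y'.val % 2^(k-a) := by
              have h1 : (((x - y').val : ℕ) : ZMod (2^(k-a))) = 0 :=
                (ZMod.natCast_eq_zero_iff _ _).2 hdvd2
              have φeq : ∀ z : ZMod (2^k),
                  ((z.val : ℕ) : ZMod (2^(k-a))) = (ZMod.castHom hdvdn' (ZMod (2^(k-a)))) z := by
                intro z
                rw [ZMod.castHom_apply, ZMod.natCast_val]
              have h2 : ((x.val : ℕ) : ZMod (2^(k-a))) = ((y'.val : ℕ) : ZMod (2^(k-a))) := by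
                rw [φeq, φeq, ← sub_eq_zero, ← map_sub, ← φeq]
                exact h1
              exact (ZMod.natCast_eq_natCast_iff _ _ _).1 h2
            apply ZMod.val_injective
            simp only at hxy
            have e1 := Nat.div_add_mod x.val (2^(k-a))
            have e2 := Nat.div_add_mod y'.val (2^(k-a))
            have e3 : 2^(k-a) * (x.val / 2^(k-a)) = 2^(k-a) * (y'.val / 2^(k-a)) := by
              rw [hxy]
            omega
      _ = 2^a := by simp
  have hScard : S.card ≤ 2 * t := by
    have h1 : S.card ≤ 2^a * (S.image f).card := Finset.card_le_mul_card_image S (2^a) hfib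
    have h2 : (S.image f).card ≤ T.card := Finset.card_le_card himg
    have h3 : T.card ≤ 2 * (t / 2^a) := count_T k a t hak.le
    calc S.card ≤ 2^a * (2 * (t / 2^a)) := le_trans h1 (Nat.mul_le_mul_left _ (le_trans h2 h3))
      _ = 2 * (2^a * (t / 2^a)) := by ring
      _ ≤ 2 * t := Nat.mul_le_mul_left _ (Nat.mul_div_le t (2^a))
  set D := univ.filter (fun σ : ZMod (2^k) => σ.val % 2 = 1) with hD
  have h2k : 2 * 2^(k-1) = 2^k := by rw [← pow_succ']; congr 1; omega
  have hDcard : 2^(k-1) ≤ D.card := by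
    calc 2^(k-1) = (Finset.range (2^(k-1))).card := by simp
      _ ≤ D.card := by
        refine Finset.card_le_card_of_injOn
          (fun j => ((2 * j + 1 : ℕ) : ZMod (2^k))) (fun j hj => ?_) ?_
        · simp only [Finset.mem_coe, Finset.mem_range] at hj
          have hlt : 2 * j + 1 < 2^k := by omega
          simp only [Finset.mem_coe, hD, mem_filter, mem_univ, true_and]
          rw [ZMod.val_cast_of_lt hlt]
          omega
        · intro x hx y hy hxy
          simp only [Finset.coe_range, Set.mem_Iio] at hx hy
          have hx' : 2 * x + 1 < 2^k := by omega
          have hy' : 2 * y + 1 < 2^k := by omega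
          have h3 := congrArg ZMod.val hxy
          rw [ZMod.val_cast_of_lt hx', ZMod.val_cast_of_lt hy'] at h3
          omega
  have hDpos : 0 < D.card := lt_of_lt_of_le (pow_pos two_pos _) hDcard
  rw [div_le_div_iff₀ (by exact_mod_cast hDpos) (by exact_mod_cast hnpos)]
  have key : S.card * 2^k ≤ 4 * t * D.card := by
    calc S.card * 2^k ≤ 2 * t * 2^k := Nat.mul_le_mul_right _ hScard
      _ = 4 * t * 2^(k-1) := by rw [← h2k]; ring
      _ ≤ 4 * t * D.card := Nat.mul_le_mul_left _ hDcard
  exact_mod_cast key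
end

section
/- Fix integers k0, k1 ≥ 1, a parameter δ ∈ (0, 1/20) with 10k0/δ a power of two, a parameter p ∈ (0, 1/2), and a vector γ ∈ ℝ^{2k1} with all entries positive. Let (r_1,q_1), …, (r_N,q_N) be i.i.d. samples from the budget-allocation distribution w, where N is a positive integer with N ≤ (10/δ)·k0·log₂(1/p). For each r ∈ [2k1] set s^r = 10·2^{max{q_i : r_i = r}} (with s^r = 0 if no i has r_i = r). Then E[ Σ_{r∈[2k1]} s^r ] ≤ 200·(k0/δ)·log₂(k0/δ)·log₂(1/p). -/
open Finset

/-- Expected total budget of the budget-allocation procedure: `N` i.i.d. samples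
`(r_i, q_i)` are drawn from the distribution `w_q^r = (2^{−q}/(1 − δ/(10k0)))·γ^r/‖γ‖₁`
on `[2k1] × {1,…,Q}` (here `q_i = (ω i).2.val + 1 ∈ {1,…,Q}`), and
`s^r = 10·2^{max{q_i : r_i = r}}` (with `s^r = 0` if no sample has `r_i = r`). Then
`E[∑_r s^r] ≤ 200·(k0/δ)·log₂(k0/δ)·log₂(1/p)`. -/
theorem budget_allocation_expected_budget (k0 k1 Q N : ℕ) [NeZero (2 * k1)]
    (hk0 : 1 ≤ k0) (hk1 : 1 ≤ k1) (δ p : ℝ)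
    (hδ : δ ∈ Set.Ioo (0 : ℝ) (1 / 20)) (hQ : (2 : ℝ) ^ Q = 10 * k0 / δ)
    (hp : p ∈ Set.Ioo (0 : ℝ) (1 / 2))
    (γ : ZMod (2 * k1) → ℝ) (hγ : ∀ r, 0 < γ r)
    (hN : 0 < N) (hNle : (N : ℝ) ≤ 10 / δ * k0 * Real.logb 2 (1 / p)) :
    ∑ ω : Fin N → ZMod (2 * k1) × Fin Q,
        (∏ i : Fin N,
          (2 : ℝ) ^ (-(((ω i).2.val : ℤ) + 1)) / (1 - δ / (10 * k0)) *
            (γ (ω i).1 / ∑ r' : ZMod (2 * k1), γ r')) *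
        (∑ r : ZMod (2 * k1),
          if (Finset.univ.filter (fun i : Fin N => (ω i).1 = r)).Nonempty then
            ((10 * 2 ^ ((Finset.univ.filter (fun i : Fin N => (ω i).1 = r)).sup
              (fun i => (ω i).2.val + 1)) : ℕ) : ℝ)
          else 0) ≤
      200 * (k0 / δ) * Real.logb 2 (k0 / δ) * Real.logb 2 (1 / p) := by
  obtain ⟨hδ0, hδlt⟩ := hδ
  obtain ⟨hp0, hplt⟩ := hp
  have hk0R : (1:ℝ) ≤ (k0:ℝ) := by exact_mod_cast hk0
  have hk0pos : (0:ℝ) < (k0:ℝ) := by linarith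
  set S : ℝ := ∑ r' : ZMod (2*k1), γ r' with hSdef
  have hSpos : 0 < S := Finset.sum_pos (fun r _ => hγ r) Finset.univ_nonempty
  have hεlt : δ / (10 * k0) ≤ 1/200 := by
    rw [div_le_div_iff₀ (by positivity) (by norm_num)]
    nlinarith
  have hεpos : 0 < δ / (10 * k0) := by positivity
  have h1ε : (0:ℝ) < 1 - δ / (10*k0) := by linarith
  set p1 : ZMod (2*k1) × Fin Q → ℝ :=
    fun x => (2:ℝ)^(-((x.2.val:ℤ)+1)) / (1 - δ/(10*k0)) * (γ x.1 / S) with hp1def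
  have hp1pos : ∀ x, 0 < p1 x := by
    intro x
    exact mul_pos (div_pos (zpow_pos (by norm_num) _) h1ε) (div_pos (hγ x.1) hSpos)
  -- geometric sum
  have hQpos : 0 < Q := by
    by_contra h
    push_neg at h
    interval_cases Q
    simp at hQ
    rw [eq_div_iff (ne_of_gt hδ0)] at hQ
    nlinarith
  have hgeom : ∑ q : Fin Q, (2:ℝ)^(-((q.val:ℤ)+1)) = 1 - δ/(10*k0) := by
    have hδeq : δ / (10 * k0) = ((2:ℝ)^Q)⁻¹ := by
      rw [hQ]
      field_simp
    have h1 : ∀ q : Fin Q, (2:ℝ)^(-((q.val:ℤ)+1)) = (2⁻¹:ℝ)^(q.val+1) := by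
      intro q
      rw [show (-((q.val:ℤ)+1)) = -((q.val+1 : ℕ):ℤ) by push_cast; ring,
        zpow_neg, zpow_natCast, ← inv_pow]
    rw [Finset.sum_congr rfl (fun q _ => h1 q)]
    rw [Fin.sum_univ_eq_sum_range (fun n => (2⁻¹:ℝ)^(n+1))]
    have : ∑ n ∈ Finset.range Q, (2⁻¹:ℝ)^(n+1) = 2⁻¹ * ∑ n ∈ Finset.range Q, (2⁻¹:ℝ)^n := by
      rw [Finset.mul_sum]
      exact Finset.sum_congr rfl (fun n _ => by ring)
    rw [this, geom_sum_eq (by norm_num) Q, hδeq, ← inv_pow]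
    field_simp
    ring
  have hsum1 : ∑ x : ZMod (2*k1) × Fin Q, p1 x = 1 := by
    rw [Fintype.sum_prod_type]
    have h1 : ∀ r : ZMod (2*k1), ∑ q : Fin Q, p1 (r, q) = γ r / S := by
      intro r
      simp only [hp1def]
      rw [← Finset.sum_mul, ← Finset.sum_div, hgeom, div_self (ne_of_gt h1ε), one_mul]
    rw [Finset.sum_congr rfl (fun r _ => h1 r), ← Finset.sum_div, ← hSdef,
      div_self (ne_of_gt hSpos)]
  have hE : ∑ x : ZMod (2*k1) × Fin Q, p1 x * (10 * 2^(x.2.val+1)) =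
      10 * Q / (1 - δ/(10*k0)) := by
    have hterm : ∀ x : ZMod (2*k1) × Fin Q,
        p1 x * (10 * 2^(x.2.val+1)) = 10/(1 - δ/(10*k0)) * (γ x.1/S) := by
      intro x
      have h2 : (2:ℝ)^(-((x.2.val:ℤ)+1)) * (2:ℝ)^(x.2.val+1) = 1 := by
        rw [← zpow_natCast (2:ℝ) (x.2.val+1), ← zpow_add₀ (by norm_num : (2:ℝ) ≠ 0),
          show (-(((x.2.val):ℤ)+1) + ((x.2.val+1:ℕ):ℤ)) = 0 by push_cast; ring, zpow_zero]
      have : p1 x * (10 * 2^(x.2.val+1)) =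
          ((2:ℝ)^(-((x.2.val:ℤ)+1)) * (2:ℝ)^(x.2.val+1)) * (10/(1 - δ/(10*k0)) * (γ x.1/S)) := by
        simp only [hp1def]
        ring
      rw [this, h2, one_mul]
    calc ∑ x : ZMod (2*k1) × Fin Q, p1 x * (10 * 2^(x.2.val+1))
        = ∑ x : ZMod (2*k1) × Fin Q, 10/(1 - δ/(10*k0)) * (γ x.1/S) :=
          Finset.sum_congr rfl (fun x _ => hterm x)
      _ = ∑ r : ZMod (2*k1), ∑ _q : Fin Q, 10/(1 - δ/(10*k0)) * (γ r/S) :=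
          Fintype.sum_prod_type _
      _ = ∑ r : ZMod (2*k1), (Q:ℝ) * (10/(1 - δ/(10*k0))) * (γ r/S) := by
          refine Finset.sum_congr rfl (fun r _ => ?_)
          rw [Finset.sum_const, Finset.card_univ, Fintype.card_fin, nsmul_eq_mul]
          ring
      _ = (Q:ℝ) * (10/(1 - δ/(10*k0))) * ∑ r : ZMod (2*k1), γ r/S := by
          rw [← Finset.mul_sum]
      _ = 10 * Q / (1 - δ/(10*k0)) := by
          rw [← Finset.sum_div, ← hSdef, div_self (ne_of_gt hSpos)]
          ring
  -- key identity
  have key : ∀ (g : ZMod (2*k1) × Fin Q → ℝ) (i : Fin N),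
      ∑ ω : Fin N → ZMod (2*k1) × Fin Q, (∏ j, p1 (ω j)) * g (ω i) =
        ∑ x : ZMod (2*k1) × Fin Q, p1 x * g x := by
    intro g i
    have hstep : ∀ ω : Fin N → ZMod (2*k1) × Fin Q,
        (∏ j, p1 (ω j)) * g (ω i) =
          ∏ j, (if j = i then p1 (ω j) * g (ω j) else p1 (ω j)) := by
      intro ω
      rw [Finset.prod_eq_mul_prod_sdiff_singleton_of_mem (Finset.mem_univ i)
            (fun j => p1 (ω j)),
          Finset.prod_eq_mul_prod_sdiff_singleton_of_mem (Finset.mem_univ i)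
            (fun j => if j = i then p1 (ω j) * g (ω j) else p1 (ω j))]
      rw [if_pos rfl]
      have : ∏ j ∈ Finset.univ \ {i}, (if j = i then p1 (ω j) * g (ω j) else p1 (ω j)) =
          ∏ j ∈ Finset.univ \ {i}, p1 (ω j) := by
        refine Finset.prod_congr rfl (fun j hj => ?_)
        rw [if_neg (Finset.notMem_singleton.mp (Finset.mem_sdiff.mp hj).2)]
      rw [this]
      ring
    calc ∑ ω : Fin N → ZMod (2*k1) × Fin Q, (∏ j, p1 (ω j)) * g (ω i)
        = ∑ ω : Fin N → ZMod (2*k1) × Fin Q,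
            ∏ j, (if j = i then p1 (ω j) * g (ω j) else p1 (ω j)) :=
          Finset.sum_congr rfl (fun ω _ => hstep ω)
      _ = ∏ j : Fin N, ∑ x : ZMod (2*k1) × Fin Q, (if j = i then p1 x * g x else p1 x) := by
          rw [Finset.prod_univ_sum (fun _ => Finset.univ)
            (fun j x => if j = i then p1 x * g x else p1 x), Fintype.piFinset_univ]
      _ = ∑ x : ZMod (2*k1) × Fin Q, p1 x * g x := by
          rw [Finset.prod_eq_single i
            (fun j _ hj => by simp only [if_neg hj]; exact hsum1)
            (fun h => absurd (Finset.mem_univ i) h)]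
          simp
  -- pointwise inner bound
  have inner_le : ∀ ω : Fin N → ZMod (2*k1) × Fin Q,
      (∑ r : ZMod (2 * k1),
        if (Finset.univ.filter (fun i : Fin N => (ω i).1 = r)).Nonempty then
          ((10 * 2 ^ ((Finset.univ.filter (fun i : Fin N => (ω i).1 = r)).sup
            (fun i => (ω i).2.val + 1)) : ℕ) : ℝ)
        else 0) ≤ ∑ i : Fin N, (10:ℝ) * 2^((ω i).2.val+1) := by
    intro ω
    rw [← Finset.sum_fiberwise Finset.univ (fun i => (ω i).1)
      (fun i => (10:ℝ) * 2^((ω i).2.val+1))]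
    refine Finset.sum_le_sum (fun r _ => ?_)
    by_cases h : (Finset.univ.filter (fun i : Fin N => (ω i).1 = r)).Nonempty
    · rw [if_pos h]
      obtain ⟨i0, hi0, hsup⟩ := Finset.exists_mem_eq_sup _ h (fun i => (ω i).2.val + 1)
      push_cast
      rw [hsup]
      exact Finset.single_le_sum (f := fun i => (10:ℝ) * 2^((ω i).2.val+1))
        (fun i _ => by positivity) hi0
    · rw [if_neg h]
      exact Finset.sum_nonneg (fun i _ => by positivity)
  have hPnonneg : ∀ ω : Fin N → ZMod (2*k1) × Fin Q, 0 ≤ ∏ j, p1 (ω j) :=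
    fun ω => Finset.prod_nonneg (fun j _ => (hp1pos _).le)
  -- numerics
  have hQ8 : (8:ℕ) ≤ Q := by
    by_contra h
    push_neg at h
    have h2 : (2:ℝ)^Q ≤ 2^7 := by
      apply pow_le_pow_right₀ (by norm_num)
      omega
    rw [hQ, div_le_iff₀ hδ0] at h2
    nlinarith
  have hQ8R : (8:ℝ) ≤ (Q:ℝ) := by exact_mod_cast hQ8
  have hQR : (Q:ℝ) = Real.logb 2 (10 * k0 / δ) := by
    rw [← hQ, Real.logb_pow, Real.logb_self_eq_one (by norm_num : (1:ℝ) < 2), mul_one]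
  have hlog10 : Real.logb 2 10 ≤ 3.5 := by
    rw [Real.logb_le_iff_le_rpow (by norm_num) (by norm_num)]
    have h1 : ((2:ℝ)^(3.5:ℝ))^(2:ℕ) = 128 := by
      rw [← Real.rpow_natCast ((2:ℝ)^(3.5:ℝ)) 2, ← Real.rpow_mul (by norm_num)]
      norm_num
    nlinarith [Real.rpow_pos_of_pos (by norm_num : (0:ℝ) < 2) (3.5:ℝ)]
  have hlog10pos : 0 ≤ Real.logb 2 10 := Real.logb_nonneg (by norm_num) (by norm_num)
  have hL : Real.logb 2 (k0/δ) = (Q:ℝ) - Real.logb 2 10 := by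
    rw [hQR, show (10:ℝ) * k0 / δ = 10 * (k0/δ) by ring,
      Real.logb_mul (by norm_num) (by positivity)]
    ring
  have hLpos : 0 < Real.logb 2 (k0/δ) := by rw [hL]; linarith
  have hLp : 1 ≤ Real.logb 2 (1/p) := by
    have h2p : (2:ℝ) ≤ 1/p := by
      rw [le_one_div (by norm_num) hp0]; linarith
    have := Real.logb_le_logb_of_le (by norm_num : (1:ℝ) < 2) (by norm_num) h2p
    rwa [Real.logb_self_eq_one (by norm_num : (1:ℝ) < 2)] at this
  have hLppos : 0 < Real.logb 2 (1/p) := by linarith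
  have hApos : 0 < (k0:ℝ)/δ := by positivity
  have hNle' : (N:ℝ) ≤ 10 * ((k0:ℝ)/δ) * Real.logb 2 (1/p) := by
    calc (N:ℝ) ≤ 10 / δ * k0 * Real.logb 2 (1/p) := hNle
      _ = 10 * ((k0:ℝ)/δ) * Real.logb 2 (1/p) := by ring
  have numeric : (N:ℝ) * (10 * Q / (1 - δ/(10*k0))) ≤
      200 * (k0 / δ) * Real.logb 2 (k0 / δ) * Real.logb 2 (1 / p) := by
    have h1c : (199:ℝ)/200 ≤ 1 - δ/(10*k0) := by linarith
    have e1 : (10:ℝ) * Q / (1 - δ/(10*k0)) ≤ 2000/199 * Q := by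
      rw [div_le_iff₀ h1ε]
      have h10 : (10:ℝ) ≤ 2000/199 * (1 - δ/(10*k0)) := by linarith
      calc (10:ℝ) * Q ≤ (2000/199 * (1 - δ/(10*k0))) * Q :=
            mul_le_mul_of_nonneg_right h10 (by linarith)
        _ = 2000/199 * Q * (1 - δ/(10*k0)) := by ring
    have e1pos : (0:ℝ) ≤ 10 * Q / (1 - δ/(10*k0)) := by positivity
    have e2 : (N:ℝ) * (10 * Q / (1 - δ/(10*k0))) ≤
        (10 * ((k0:ℝ)/δ) * Real.logb 2 (1/p)) * (2000/199 * Q) := by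
      apply mul_le_mul hNle' e1 e1pos
      positivity
    have h4 : (20000:ℝ)/199 * Q ≤ 200 * Real.logb 2 (k0/δ) := by
      rw [hL]
      linarith
    calc (N:ℝ) * (10 * Q / (1 - δ/(10*k0)))
        ≤ (10 * ((k0:ℝ)/δ) * Real.logb 2 (1/p)) * (2000/199 * Q) := e2
      _ = ((k0:ℝ)/δ * Real.logb 2 (1/p)) * (20000/199 * Q) := by ring
      _ ≤ ((k0:ℝ)/δ * Real.logb 2 (1/p)) * (200 * Real.logb 2 (k0/δ)) := by
          apply mul_le_mul_of_nonneg_left h4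
          positivity
      _ = 200 * (k0 / δ) * Real.logb 2 (k0 / δ) * Real.logb 2 (1 / p) := by ring
  -- main chain
  calc ∑ ω : Fin N → ZMod (2 * k1) × Fin Q,
        (∏ i : Fin N,
          (2 : ℝ) ^ (-(((ω i).2.val : ℤ) + 1)) / (1 - δ / (10 * k0)) *
            (γ (ω i).1 / S)) *
        (∑ r : ZMod (2 * k1),
          if (Finset.univ.filter (fun i : Fin N => (ω i).1 = r)).Nonempty then
            ((10 * 2 ^ ((Finset.univ.filter (fun i : Fin N => (ω i).1 = r)).sup
              (fun i => (ω i).2.val + 1)) : ℕ) : ℝ)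
          else 0)
      ≤ ∑ ω : Fin N → ZMod (2*k1) × Fin Q,
          (∏ j, p1 (ω j)) * ∑ i : Fin N, (10:ℝ) * 2^((ω i).2.val+1) := by
        refine Finset.sum_le_sum (fun ω _ => ?_)
        exact mul_le_mul_of_nonneg_left (inner_le ω) (hPnonneg ω)
    _ = ∑ i : Fin N, ∑ ω : Fin N → ZMod (2*k1) × Fin Q,
          (∏ j, p1 (ω j)) * ((10:ℝ) * 2^((ω i).2.val+1)) := by
        simp_rw [Finset.mul_sum]
        rw [Finset.sum_comm]
    _ = ∑ _i : Fin N, (10 * Q / (1 - δ/(10*k0))) := by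
        refine Finset.sum_congr rfl (fun i _ => ?_)
        exact (key (fun x => 10 * 2^(x.2.val+1)) i).trans hE
    _ = (N:ℝ) * (10 * Q / (1 - δ/(10*k0))) := by
        rw [Finset.sum_const, Finset.card_univ, Fintype.card_fin, nsmul_eq_mul]
    _ ≤ 200 * (k0 / δ) * Real.logb 2 (k0 / δ) * Real.logb 2 (1 / p) := numeric
end
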